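/- Let n ≥ 8 and let W_n = C_{n-1} ∨ K_1 be the wheel graph with hub h and rim cycle C_{n-1}. Let B be a subset of the rim vertices with |B| ≥ 2. Then {h} ∪ B is a mutual-visibility set of W_n if and only if B consists of exactly two vertices u and v with d_{C_{n-1}}(u,v) ≤ 2 (distance measured in the rim cycle). -/

import Mathlib

open SimpleGraph Polynomial

/-- Two vertices `u` and `v` are `X`-visible in `G` if some shortest `u`–`v` path
has no internal vertex in `X`, i.e. its support meets `X` only possibly in `{u, v}`. -/
def XVisible {V : Type*} (G : SimpleGraph V) (X : Set V) (u v : V) : Prop :=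
  ∃ p : G.Walk u v, p.IsPath ∧ p.length = G.dist u v ∧
    ∀ w ∈ p.support, w ∈ X → w = u ∨ w = v

/-- `X` is a mutual-visibility set of `G` if every pair of vertices of `X` is `X`-visible. -/
def MutualVisibilitySet {V : Type*} (G : SimpleGraph V) (X : Set V) : Prop :=
  ∀ u ∈ X, ∀ v ∈ X, XVisible G X u v

open Classical in
/-- The visibility polynomial: `∑ m_k x^k` where `m_k` is the number of
mutual-visibility sets of cardinality `k`. -/
noncomputable def visPoly {V : Type*} [Fintype V] (G : SimpleGraph V) : Polynomial ℕ :=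
  ∑ S ∈ Finset.univ.powerset.filter (fun S : Finset V => MutualVisibilitySet G ↑S),
    Polynomial.X ^ S.card

/-- The wheel graph with rim `cycleGraph m` (on `some`-vertices) and hub `none`. -/
def wheelGraph (m : ℕ) : SimpleGraph (Option (Fin m)) :=
  SimpleGraph.fromRel (fun u v =>
    (u = none ∧ v ≠ none) ∨
    ∃ i j : Fin m, u = some i ∧ v = some j ∧ (SimpleGraph.cycleGraph m).Adj i j)

/-- The shell graph with path `pathGraph m` (on `some`-vertices) and apex `none`. -/
def shellGraph (m : ℕ) : SimpleGraph (Option (Fin m)) :=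
  SimpleGraph.fromRel (fun u v =>
    (u = none ∧ v ≠ none) ∨
    ∃ i j : Fin m, u = some i ∧ v = some j ∧ (SimpleGraph.pathGraph m).Adj i j)

/-- The bow graph: apex `none` joined to two disjoint paths of `a` and `b` vertices. -/
def bowGraph (a b : ℕ) : SimpleGraph (Option (Fin a ⊕ Fin b)) :=
  SimpleGraph.fromRel (fun u v =>
    (u = none ∧ v ≠ none) ∨
    (∃ i j : Fin a, u = some (Sum.inl i) ∧ v = some (Sum.inl j) ∧ (SimpleGraph.pathGraph a).Adj i j) ∨
    (∃ i j : Fin b, u = some (Sum.inr i) ∧ v = some (Sum.inr j) ∧ (SimpleGraph.pathGraph b).Adj i j))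

/-- The friendship graph: center `none`; the `i`-th triangle has the two
noncentral vertices `some (i, 0)` and `some (i, 1)`. -/
def friendshipGraph (n : ℕ) : SimpleGraph (Option (Fin n × Fin 2)) :=
  SimpleGraph.fromRel (fun u v =>
    (u = none ∧ v ≠ none) ∨
    ∃ (i : Fin n) (x y : Fin 2), u = some (i, x) ∧ v = some (i, y) ∧ x ≠ y)

/-- The helm graph: a copy of the wheel (the `Sum.inl`-vertices) together with a
pendant vertex `Sum.inr k` attached to each rim vertex `Sum.inl (some k)`. -/
def helmGraph (m : ℕ) : SimpleGraph (Option (Fin m) ⊕ Fin m) :=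
  SimpleGraph.fromRel (fun u v =>
    (∃ x y : Option (Fin m), u = Sum.inl x ∧ v = Sum.inl y ∧ (wheelGraph m).Adj x y) ∨
    (∃ k : Fin m, u = Sum.inl (some k) ∧ v = Sum.inr k))

/-- `W` is a `c_Q`-visible set: `W ⊆ V \ Q`, every pair of vertices of `W` is
`Q`-visible, and `{u, w}` is `Q`-visible for all `u ∈ Q`, `w ∈ W`. -/
def CQVisible {V : Type*} (G : SimpleGraph V) (Q W : Set V) : Prop :=
  W ⊆ Qᶜ ∧ (∀ u ∈ W, ∀ v ∈ W, XVisible G Q u v) ∧ (∀ u ∈ Q, ∀ w ∈ W, XVisible G Q u w)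

/-- An absolute `c_Q`-visible set: a `c_Q`-visible set for which `Q` is moreover a
mutual-visibility set of `G`. -/
def AbsoluteCQVisible {V : Type*} (G : SimpleGraph V) (Q W : Set V) : Prop :=
  CQVisible G Q W ∧ MutualVisibilitySet G Q

namespace Scratch

variable {m : ℕ}

lemma wheel_adj_some {i j : Fin m} :
    (wheelGraph m).Adj (some i) (some j) ↔ (SimpleGraph.cycleGraph m).Adj i j := by
  constructor
  · rintro ⟨hne, (⟨h, -⟩ | ⟨i', j', hi, hj, hadj⟩) | (⟨h, -⟩ | ⟨i', j', hi, hj, hadj⟩)⟩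
    · exact absurd h (by simp)
    · simp only [Option.some.injEq] at hi hj; subst hi; subst hj; exact hadj
    · exact absurd h (by simp)
    · simp only [Option.some.injEq] at hi hj; subst hi; subst hj; exact hadj.symm
  · intro h
    exact ⟨by simpa using h.ne, Or.inl (Or.inr ⟨i, j, rfl, rfl, h⟩)⟩

lemma wheel_adj_hub (i : Fin m) : (wheelGraph m).Adj none (some i) :=
  ⟨by simp, Or.inl (Or.inl ⟨rfl, by simp⟩)⟩

lemma d_lin [NeZero m] (a b : Fin m) :
    (b - a).val < m ∧ (b.val = a.val + (b - a).val ∨ b.val + m = a.val + (b - a).val) := by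
  have ha := a.is_lt; have hb := b.is_lt
  have hsub : (b - a).val = (m - a.val + b.val) % m := by rw [Fin.sub_def]
  refine ⟨(b - a).is_lt, ?_⟩
  rcases le_or_gt a.val b.val with h | h
  · left
    have he : m - a.val + b.val = (b.val - a.val) + m := by omega
    rw [hsub, he, Nat.add_mod_right, Nat.mod_eq_of_lt (by omega)]
    omega
  · right
    rw [hsub, Nat.mod_eq_of_lt (by omega)]
    omega

lemma wheel_dist_two {a b : Fin m} (hne : a ≠ b) (hnadj : ¬(SimpleGraph.cycleGraph m).Adj a b) :
    (wheelGraph m).dist (some a) (some b) = 2 := by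
  let p : (wheelGraph m).Walk (some a) (some b) :=
    Walk.cons (wheel_adj_hub a).symm (Walk.cons (wheel_adj_hub b) Walk.nil)
  have hle : (wheelGraph m).dist (some a) (some b) ≤ 2 := by
    simpa [p] using SimpleGraph.dist_le p
  have hreach : (wheelGraph m).Reachable (some a) (some b) := ⟨p⟩
  have h0 : 0 < (wheelGraph m).dist (some a) (some b) :=
    hreach.pos_dist_of_ne (by simpa using hne)
  have h1 : (wheelGraph m).dist (some a) (some b) ≠ 1 := fun h =>
    hnadj (wheel_adj_some.mp (SimpleGraph.dist_eq_one_iff_adj.mp h))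
  omega

open Fin.CommRing in
lemma cycle_adj_succ [NeZero m] (hm : 2 ≤ m) (x : Fin m) :
    (SimpleGraph.cycleGraph m).Adj x (x + 1) := by
  rw [SimpleGraph.cycleGraph_adj']
  right
  rw [show x + 1 - x = 1 by ring, Fin.val_one']
  exact Nat.mod_eq_of_lt (by omega)

open Fin.CommRing in
lemma cycle_reachable (hm : 2 ≤ m) (u v : Fin m) :
    (SimpleGraph.cycleGraph m).Reachable u v := by
  haveI : NeZero m := ⟨by omega⟩
  suffices H : ∀ k : ℕ, (SimpleGraph.cycleGraph m).Reachable u (u + (k : Fin m)) by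
    have := H (v - u).val
    rwa [Fin.cast_val_eq_self, show u + (v - u) = v by ring] at this
  intro k
  induction k with
  | zero => simpa using Reachable.refl u
  | succ k ih =>
    have hcast : ((k + 1 : ℕ) : Fin m) = (k : Fin m) + 1 := by push_cast; ring
    rw [hcast, ← add_assoc]
    exact ih.trans (cycle_adj_succ hm _).reachable

lemma cycle_dist_le_two_cases (hm : 2 ≤ m) {u v : Fin m} (hne : u ≠ v)
    (hd : (SimpleGraph.cycleGraph m).dist u v ≤ 2) :
    (SimpleGraph.cycleGraph m).Adj u v ∨
      ∃ c, (SimpleGraph.cycleGraph m).Adj u c ∧ (SimpleGraph.cycleGraph m).Adj c v := by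
  have hreach := cycle_reachable hm u v
  obtain ⟨p, hlen⟩ := hreach.exists_walk_length_eq_dist
  have hpos := hreach.pos_dist_of_ne hne
  cases p with
  | nil => simp at hlen; omega
  | cons hadj q =>
    cases q with
    | nil => exact Or.inl hadj
    | cons hadj2 q2 =>
      simp only [Walk.length_cons] at hlen
      have h0 : q2.length = 0 := by omega
      have := Walk.eq_of_length_eq_zero h0
      subst this
      exact Or.inr ⟨_, hadj, hadj2⟩

lemma xvisible_refl {V : Type*} (G : SimpleGraph V) (X : Set V) (u : V) :
    XVisible G X u u :=
  ⟨Walk.nil, Walk.IsPath.nil, by simp [SimpleGraph.dist_self], by intro w hw _; simp at hw; tauto⟩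

lemma xvisible_symm {V : Type*} {G : SimpleGraph V} {X : Set V} {u v : V}
    (h : XVisible G X u v) : XVisible G X v u := by
  obtain ⟨p, hp, hl, hX⟩ := h
  refine ⟨p.reverse, hp.reverse, ?_, ?_⟩
  · rw [Walk.length_reverse, hl, SimpleGraph.dist_comm]
  · intro w hw hwX
    rw [Walk.support_reverse, List.mem_reverse] at hw
    exact (hX w hw hwX).symm

lemma xvisible_of_adj {V : Type*} (G : SimpleGraph V) (X : Set V) {u v : V}
    (h : G.Adj u v) : XVisible G X u v := by
  refine ⟨Walk.cons h Walk.nil, ?_, ?_, ?_⟩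
  · simp [Walk.isPath_def, h.ne]
  · simp [SimpleGraph.dist_eq_one_iff_adj.mpr h]
  · intro w hw _
    simp at hw
    tauto

lemma stepA {B : Finset (Fin m)}
    (hMV : MutualVisibilitySet (wheelGraph m)
      (insert (none : Option (Fin m)) (some '' (B : Set (Fin m)))))
    {a b : Fin m} (ha : a ∈ B) (hb : b ∈ B) (hab : a ≠ b) :
    (SimpleGraph.cycleGraph m).Adj a b ∨
      ∃ c, (SimpleGraph.cycleGraph m).Adj a c ∧ (SimpleGraph.cycleGraph m).Adj c b ∧ c ∉ B := by
  by_cases hadj : (SimpleGraph.cycleGraph m).Adj a b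
  · exact Or.inl hadj
  right
  have hdist := wheel_dist_two hab hadj
  have haX : (some a : Option (Fin m)) ∈ insert (none : Option (Fin m)) (some '' (B : Set (Fin m))) := by
    simp [ha]
  have hbX : (some b : Option (Fin m)) ∈ insert (none : Option (Fin m)) (some '' (B : Set (Fin m))) := by
    simp [hb]
  obtain ⟨p, hp, hl, hX⟩ := hMV _ haX _ hbX
  rw [hdist] at hl
  cases p with
  | nil => simp at hl
  | cons h1 q =>
    rename_i c
    cases q with
    | nil => simp at hl
    | cons h2 q2 =>
      simp only [Walk.length_cons] at hl
      have h0 : q2.length = 0 := by omega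
      have := Walk.eq_of_length_eq_zero h0
      subst this
      have hmem : c ∈ (Walk.cons h1 (Walk.cons h2 q2)).support := by
        simp [Walk.support_cons]
      have hcX : c ∉ insert (none : Option (Fin m)) (some '' (B : Set (Fin m))) := by
        intro hc
        rcases hX c hmem hc with rfl | rfl
        · exact h1.ne rfl
        · exact h2.ne rfl
      cases c with
      | none => exact absurd (by simp) hcX
      | some k =>
        refine ⟨k, wheel_adj_some.mp h1, wheel_adj_some.mp h2, fun hk => hcX ?_⟩
        simp [hk]

lemma pair_numeric (hm : 7 ≤ m) {B : Finset (Fin m)} {a b : Fin m} (hab : a ≠ b)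
    (h : (SimpleGraph.cycleGraph m).Adj a b ∨
      ∃ c, (SimpleGraph.cycleGraph m).Adj a c ∧ (SimpleGraph.cycleGraph m).Adj c b ∧ c ∉ B) :
    (b - a).val = 1 ∨ (b - a).val = m - 1 ∨
      ((b - a).val = 2 ∧ ∀ c : Fin m, (c - a).val = 1 → c ∉ B) ∨
      ((b - a).val = m - 2 ∧ ∀ c : Fin m, (c - b).val = 1 → c ∉ B) := by
  haveI : NeZero m := ⟨by omega⟩
  have hvab : a.val ≠ b.val := fun h' => hab (Fin.ext h')
  have hla := a.is_lt; have hlb := b.is_lt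
  obtain ⟨l1, e1⟩ := d_lin a b
  obtain ⟨l2, e2⟩ := d_lin b a
  rcases h with hadj | ⟨c, h1, h2, hcB⟩
  · rw [SimpleGraph.cycleGraph_adj'] at hadj
    rcases hadj with h' | h'
    · right; left; omega
    · left; exact h'
  · have hlc := c.is_lt
    obtain ⟨l3, e3⟩ := d_lin a c
    obtain ⟨l4, e4⟩ := d_lin c a
    obtain ⟨l5, e5⟩ := d_lin c b
    obtain ⟨l6, e6⟩ := d_lin b c
    rw [SimpleGraph.cycleGraph_adj'] at h1 h2
    rcases h1 with h1 | h1 <;> rcases h2 with h2 | h2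
    · right; right; right
      refine ⟨by omega, fun c' hc' => ?_⟩
      obtain ⟨l7, e7⟩ := d_lin b c'
      have hcc : c' = c := Fin.ext (by omega)
      rwa [hcc]
    · exact absurd (Fin.ext (show a.val = b.val by omega)) hab
    · exact absurd (Fin.ext (show a.val = b.val by omega)) hab
    · right; right; left
      refine ⟨by omega, fun c' hc' => ?_⟩
      obtain ⟨l7, e7⟩ := d_lin a c'
      have hcc : c' = c := Fin.ext (by omega)
      rwa [hcc]

lemma sub_sum {m a b k k' : ℕ} (ha : a < m) (hb : b < m) (hab : a ≠ b)
    (l : k < m) (l' : k' < m)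
    (e : b = a + k ∨ b + m = a + k) (e' : a = b + k' ∨ a + m = b + k') : k + k' = m := by
  omega

lemma sub_add {m a b c k1 k3 k2 : ℕ} (ha : a < m) (hb : b < m) (hc : c < m)
    (l1 : k1 < m) (l3 : k3 < m) (l2 : k2 < m)
    (e1 : b = a + k1 ∨ b + m = a + k1) (e5 : c = b + k3 ∨ c + m = b + k3)
    (e3 : c = a + k2 ∨ c + m = a + k2) : k1 + k3 = k2 ∨ k1 + k3 = k2 + m := by
  omega

set_option maxHeartbeats 1000000 in
lemma triple (hm : 7 ≤ m) {B : Finset (Fin m)} {u v w : Fin m}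
    (hu : u ∈ B) (hv : v ∈ B) (hw : w ∈ B)
    (huv : u ≠ v) (huw : u ≠ w) (hvw : v ≠ w)
    (hstep : ∀ a ∈ B, ∀ b ∈ B, a ≠ b →
      (b - a).val = 1 ∨ (b - a).val = m - 1 ∨
        ((b - a).val = 2 ∧ ∀ c : Fin m, (c - a).val = 1 → c ∉ B) ∨
        ((b - a).val = m - 2 ∧ ∀ c : Fin m, (c - b).val = 1 → c ∉ B)) : False := by
  haveI : NeZero m := ⟨by omega⟩
  have H1 := hstep u hu v hv huv
  have H2 := hstep u hu w hw huw
  have H3 := hstep v hv w hw hvw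
  have hvuv : u.val ≠ v.val := fun h' => huv (Fin.ext h')
  have hvuw : u.val ≠ w.val := fun h' => huw (Fin.ext h')
  have hvvw : v.val ≠ w.val := fun h' => hvw (Fin.ext h')
  have hlu := u.is_lt; have hlv := v.is_lt; have hlw := w.is_lt
  obtain ⟨l1, e1⟩ := d_lin u v
  obtain ⟨l2, e2⟩ := d_lin v u
  obtain ⟨l3, e3⟩ := d_lin u w
  obtain ⟨l4, e4⟩ := d_lin w u
  obtain ⟨l5, e5⟩ := d_lin v w
  obtain ⟨l6, e6⟩ := d_lin w v
  have s1 := sub_sum hlu hlv hvuv l1 l2 e1 e2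
  have s2 := sub_sum hlu hlw hvuw l3 l4 e3 e4
  have s3 := sub_sum hlv hlw hvvw l5 l6 e5 e6
  have t := sub_add hlu hlv hlw l1 l5 l3 e1 e5 e3
  clear e1 e2 e3 e4 e5 e6 hvuv hvuw hvvw hlu hlv hlw hstep
  rcases H1 with h1 | h1 | ⟨h1, hb1⟩ | ⟨h1, hb1⟩ <;>
    rcases H2 with h2 | h2 | ⟨h2, hb2⟩ | ⟨h2, hb2⟩ <;>
      rcases H3 with h3 | h3 | ⟨h3, hb3⟩ | ⟨h3, hb3⟩ <;>
        first
          | omega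
          | exact absurd hv (hb2 v (by omega))
          | exact absurd hw (hb1 w (by omega))
          | exact absurd hu (hb3 u (by omega))

end Scratch

theorem wheel_hub_mutualVisibility_iff (n : ℕ) (hn : 8 ≤ n)
    (B : Finset (Fin (n - 1))) (hB : 2 ≤ B.card) :
    MutualVisibilitySet (wheelGraph (n - 1))
      (insert (none : Option (Fin (n - 1))) (some '' (B : Set (Fin (n - 1))))) ↔
      ∃ u v : Fin (n - 1), u ≠ v ∧ B = {u, v} ∧
        (SimpleGraph.cycleGraph (n - 1)).dist u v ≤ 2 := by
  have hm : 7 ≤ n - 1 := by omega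
  haveI : NeZero (n - 1) := ⟨by omega⟩
  constructor
  · intro hMV
    have hstepN : ∀ a ∈ B, ∀ b ∈ B, a ≠ b →
        ((b - a).val = 1 ∨ (b - a).val = (n - 1) - 1 ∨
          ((b - a).val = 2 ∧ ∀ c : Fin (n - 1), (c - a).val = 1 → c ∉ B) ∨
          ((b - a).val = (n - 1) - 2 ∧ ∀ c : Fin (n - 1), (c - b).val = 1 → c ∉ B)) :=
      fun a ha b hb hab => Scratch.pair_numeric hm hab (Scratch.stepA hMV ha hb hab)
    obtain ⟨u, hu, v, hv, huv⟩ := Finset.one_lt_card.mp hB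
    refine ⟨u, v, huv, ?_, ?_⟩
    · by_contra hne
      have hsub : ({u, v} : Finset (Fin (n - 1))) ⊆ B := by
        intro x hx
        simp only [Finset.mem_insert, Finset.mem_singleton] at hx
        rcases hx with rfl | rfl <;> assumption
      obtain ⟨w, hwB, hwuv⟩ := Finset.exists_of_ssubset (hsub.ssubset_of_ne (fun h => hne h.symm))
      simp only [Finset.mem_insert, Finset.mem_singleton, not_or] at hwuv
      exact Scratch.triple hm hu hv hwB huv (Ne.symm hwuv.1) (Ne.symm hwuv.2) hstepN
    · rcases Scratch.stepA hMV hu hv huv with hadj | ⟨c, h1, h2, -⟩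
      · exact le_trans (SimpleGraph.dist_le (Walk.cons hadj Walk.nil)) (by simp)
      · exact le_trans (SimpleGraph.dist_le (Walk.cons h1 (Walk.cons h2 Walk.nil))) (by simp)
  · rintro ⟨u, v, huv, rfl, hdist⟩
    have hmemu : (some u : Option (Fin (n - 1))) ∈
        insert (none : Option (Fin (n - 1))) (some '' (({u, v} : Finset (Fin (n - 1))) : Set (Fin (n - 1)))) := by
      simp
    have hkey : XVisible (wheelGraph (n - 1))
        (insert (none : Option (Fin (n - 1))) (some '' (({u, v} : Finset (Fin (n - 1))) : Set (Fin (n - 1)))))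
        (some u) (some v) := by
      by_cases hadj : (SimpleGraph.cycleGraph (n - 1)).Adj u v
      · exact Scratch.xvisible_of_adj _ _ (Scratch.wheel_adj_some.mpr hadj)
      · obtain ⟨c, h1, h2⟩ := (Scratch.cycle_dist_le_two_cases (by omega) huv hdist).resolve_left hadj
        have hcu : c ≠ u := h1.ne'
        have hcv : c ≠ v := h2.ne
        refine ⟨Walk.cons (Scratch.wheel_adj_some.mpr h1) (Walk.cons (Scratch.wheel_adj_some.mpr h2) Walk.nil), ?_, ?_, ?_⟩
        · simp [Walk.isPath_def, huv, hcu, hcv, Ne.symm hcu]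
        · rw [Scratch.wheel_dist_two huv hadj]
          simp
        · intro z hz hzX
          simp only [Walk.support_cons, Walk.support_nil, List.mem_cons, List.not_mem_nil,
            or_false] at hz
          rcases hz with rfl | rfl | rfl
          · exact Or.inl rfl
          · exfalso
            rcases Set.mem_insert_iff.mp hzX with h | ⟨a, haB, heq⟩
            · exact absurd h (by simp)
            · have hac : a = c := Option.some_injective _ heq
              simp only [Finset.coe_insert, Finset.coe_singleton, Set.mem_insert_iff,
                Set.mem_singleton_iff] at haB
              rcases haB with rfl | rfl
              · exact hcu hac.symm
              · exact hcv hac.symm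
          · exact Or.inr rfl
    intro x hx y hy
    simp only [Set.mem_insert_iff, Finset.coe_insert, Finset.coe_singleton, Set.mem_image,
      Set.mem_insert_iff, Set.mem_singleton_iff] at hx hy
    have hclean : ∀ z : Option (Fin (n - 1)),
        (z = none ∨ ∃ a, (a = u ∨ a = v) ∧ some a = z) → z = none ∨ z = some u ∨ z = some v := by
      rintro z (rfl | ⟨a, (rfl | rfl), rfl⟩)
      · exact Or.inl rfl
      · exact Or.inr (Or.inl rfl)
      · exact Or.inr (Or.inr rfl)
    rcases hclean x hx with rfl | rfl | rfl <;> rcases hclean y hy with rfl | rfl | rfl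
    · exact Scratch.xvisible_refl _ _ _
    · exact Scratch.xvisible_of_adj _ _ (Scratch.wheel_adj_hub u)
    · exact Scratch.xvisible_of_adj _ _ (Scratch.wheel_adj_hub v)
    · exact Scratch.xvisible_symm (Scratch.xvisible_of_adj _ _ (Scratch.wheel_adj_hub u))
    · exact Scratch.xvisible_refl _ _ _
    · exact hkey
    · exact Scratch.xvisible_symm (Scratch.xvisible_of_adj _ _ (Scratch.wheel_adj_hub v))
    · exact Scratch.xvisible_symm hkey
    · exact Scratch.xvisible_refl _ _ _
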